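/- Let I ⊆ ℝ be an open interval, K ∈ ℝ, ψ : I → ℝ a C² function, and ρ := e^{−ψ}. Assume that for all s < t in I (with t − s < π/√(−K) in case K < 0) and all λ ∈ (0,1), ρ((1−λ)s + λt) ≥ ( σ^{(1−λ)}_{−K}(t−s) · ρ(s)^{−1} + σ^{(λ)}_{−K}(t−s) · ρ(t)^{−1} )^{−1}. Then ψ''(t) + ψ'(t)² ≥ K for every t ∈ I. -/

import Mathlib

/-- The comparison function `s_κ`: solution of `f'' + κ f = 0`, `f(0) = 0`, `f'(0) = 1`. -/
noncomputable def sk (κ r : ℝ) : ℝ :=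
  if 0 < κ then Real.sin (Real.sqrt κ * r) / Real.sqrt κ
  else if κ = 0 then r
  else Real.sinh (Real.sqrt (-κ) * r) / Real.sqrt (-κ)

/-- The distortion coefficient `σ^{(λ)}_κ(r) = s_κ(λ r)/s_κ(r)`, with `σ^{(λ)}_κ(0) = λ`. -/
noncomputable def sigmaCoeff (κ lam r : ℝ) : ℝ :=
  if r = 0 then lam else sk κ (lam * r) / sk κ r

open Filter Topology


lemma symm_second_deriv {h : ℝ → ℝ} {x L : ℝ}
    (h1 : ∀ᶠ y in 𝓝 x, DifferentiableAt ℝ h y)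
    (h2 : HasDerivAt (deriv h) L x) :
    Tendsto (fun ε => (h (x + ε) + h (x - ε) - 2 * h x) / ε ^ 2)
      (𝓝[>] (0 : ℝ)) (𝓝 L) := by
  have cadd : Tendsto (fun ε : ℝ => x + ε) (𝓝 0) (𝓝 x) := by
    have : Continuous (fun ε : ℝ => x + ε) := continuous_const.add continuous_id
    simpa using this.tendsto (0 : ℝ)
  have csub : Tendsto (fun ε : ℝ => x - ε) (𝓝 0) (𝓝 x) := by
    have : Continuous (fun ε : ℝ => x - ε) := continuous_const.sub continuous_id
    simpa using this.tendsto (0 : ℝ)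
  have hx : Tendsto (fun ε : ℝ => x + ε) (𝓝[>] 0) (𝓝[≠] x) := by
    apply tendsto_nhdsWithin_of_tendsto_nhds_of_eventually_within
    · exact cadd.mono_left nhdsWithin_le_nhds
    · filter_upwards [self_mem_nhdsWithin] with ε (hε : 0 < ε)
      simp [ne_of_gt, hε]
  have hx' : Tendsto (fun ε : ℝ => x - ε) (𝓝[>] 0) (𝓝[≠] x) := by
    apply tendsto_nhdsWithin_of_tendsto_nhds_of_eventually_within
    · exact csub.mono_left nhdsWithin_le_nhds
    · filter_upwards [self_mem_nhdsWithin] with ε (hε : 0 < ε)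
      simp only [Set.mem_compl_iff, Set.mem_singleton_iff]
      intro hc
      nlinarith [sub_eq_self.1 hc]
  have hslope := hasDerivAt_iff_tendsto_slope.1 h2
  have hev : ∀ᶠ ε : ℝ in 𝓝[>] 0, DifferentiableAt ℝ h (x + ε) ∧ DifferentiableAt ℝ h (x - ε) := by
    have e1 : ∀ᶠ ε : ℝ in 𝓝 0, DifferentiableAt ℝ h (x + ε) := cadd.eventually h1
    have e2 : ∀ᶠ ε : ℝ in 𝓝 0, DifferentiableAt ℝ h (x - ε) := csub.eventually h1
    exact eventually_nhdsWithin_of_eventually_nhds (e1.and e2)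
  apply HasDerivAt.lhopital_zero_nhdsGT
    (f' := fun ε => deriv h (x + ε) - deriv h (x - ε)) (g' := fun ε => 2 * ε)
  · filter_upwards [hev] with ε ⟨hp, hm⟩
    have d1 : HasDerivAt (fun ε : ℝ => h (x + ε)) (deriv h (x + ε)) ε := by
      have := (hp.hasDerivAt).comp ε ((hasDerivAt_id ε).const_add x)
      simpa [Function.comp_def] using this
    have d2 : HasDerivAt (fun ε : ℝ => h (x - ε)) (-deriv h (x - ε)) ε := by
      have := (hm.hasDerivAt).comp ε ((hasDerivAt_id ε).neg.const_add x)
      simpa [sub_eq_add_neg, Function.comp_def] using this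
    simpa [sub_eq_add_neg] using (d1.add d2).sub_const (2 * h x)
  · filter_upwards with ε
    simpa [mul_comm] using (hasDerivAt_pow 2 ε)
  · filter_upwards [self_mem_nhdsWithin] with ε (hε : 0 < ε)
    positivity
  · have hc : ContinuousAt h x := (h1.self_of_nhds).continuousAt
    have : Tendsto (fun ε : ℝ => h (x + ε) + h (x - ε) - 2 * h x) (𝓝 0)
        (𝓝 (h x + h x - 2 * h x)) :=
      ((hc.tendsto.comp cadd).add (hc.tendsto.comp csub)).sub tendsto_const_nhds
    have h0 : h x + h x - 2 * h x = 0 := by ring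
    rw [h0] at this
    exact this.mono_left nhdsWithin_le_nhds
  · have : Tendsto (fun ε : ℝ => ε ^ 2) (𝓝 0) (𝓝 0) := by
      simpa using (continuous_pow 2).tendsto (0 : ℝ)
    exact this.mono_left nhdsWithin_le_nhds
  · have t1 : Tendsto (fun ε : ℝ => slope (deriv h) x (x + ε)) (𝓝[>] 0) (𝓝 L) := hslope.comp hx
    have t2 : Tendsto (fun ε : ℝ => slope (deriv h) x (x - ε)) (𝓝[>] 0) (𝓝 L) := hslope.comp hx'
    have hL : ((L + L) / 2 : ℝ) = L := by ring
    have := (t1.add t2).div_const 2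
    rw [hL] at this
    apply this.congr'
    filter_upwards [self_mem_nhdsWithin] with ε (hε : 0 < ε)
    have h1 : x + ε - x = ε := by ring
    have h2 : x - ε - x = -ε := by ring
    simp only [slope_def_field]
    rw [h1, h2, div_neg, ← sub_eq_add_neg, div_sub_div_same, div_div]
    ring_nf

lemma exists_c (K : ℝ) : ∃ c : ℝ → ℝ, (∀ x, DifferentiableAt ℝ c x) ∧ (∀ x, c (-x) = c x) ∧
    c 0 = 1 ∧ HasDerivAt (deriv c) K 0 ∧
    ∀ᶠ ε in 𝓝[>] (0:ℝ), 0 < c ε ∧ sigmaCoeff (-K) (1/2) (2*ε) = 1/(2*c ε) ∧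
      (K < 0 → 2*ε < Real.pi / Real.sqrt (-K)) := by
  rcases lt_trichotomy K 0 with hK | hK | hK
  · -- K < 0 : c x = cos (a x), a = sqrt (-K)
    set a := Real.sqrt (-K) with ha_def
    have ha : 0 < a := Real.sqrt_pos.2 (by linarith)
    have ha2 : a ^ 2 = -K := Real.sq_sqrt (by linarith)
    have d1 : ∀ x : ℝ, HasDerivAt (fun y => Real.cos (a * y)) (-Real.sin (a * x) * a) x := by
      intro x
      simpa [Function.comp_def] using (Real.hasDerivAt_cos (a * x)).comp x ((hasDerivAt_id x).const_mul a)
    refine ⟨fun x => Real.cos (a * x), fun x => (d1 x).differentiableAt, ?_, by simp, ?_, ?_⟩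
    · intro x; show Real.cos (a * -x) = Real.cos (a * x)
      rw [mul_neg, Real.cos_neg]
    · have hd : deriv (fun y => Real.cos (a * y)) = fun x => -Real.sin (a * x) * a :=
        funext fun x => (d1 x).deriv
      rw [hd]
      have d2 : HasDerivAt (fun x : ℝ => -Real.sin (a * x) * a) (-(Real.cos (a * 0) * a) * a) 0 := by
        have := ((Real.hasDerivAt_sin (a * 0)).comp 0 ((hasDerivAt_id 0).const_mul a)).neg.mul_const a
        simpa [mul_comm] using this
      have he : -(Real.cos (a * 0) * a) * a = K := by simp; nlinarith
      rwa [he] at d2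
    · have hmem : ∀ᶠ ε in 𝓝[>] (0:ℝ), ε < Real.pi / (2 * a) := by
        apply eventually_nhdsWithin_of_eventually_nhds
        exact eventually_lt_nhds (by positivity)
      filter_upwards [hmem, self_mem_nhdsWithin] with ε hεlt (hε : 0 < ε)
      rw [lt_div_iff₀ (by positivity)] at hεlt
      have haε : a * ε < Real.pi / 2 := by nlinarith
      have hsinpos : 0 < Real.sin (a * ε) :=
        Real.sin_pos_of_pos_of_lt_pi (by positivity) (by linarith [Real.pi_pos])
      have hcospos : 0 < Real.cos (a * ε) :=
        Real.cos_pos_of_mem_Ioo ⟨by nlinarith [Real.pi_pos], haε⟩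
      refine ⟨hcospos, ?_, fun _ => ?_⟩
      · rw [sigmaCoeff, if_neg (by positivity : (0:ℝ) < 2*ε).ne']
        simp only [sk, if_pos (by linarith : (0:ℝ) < -K), ← ha_def]
        rw [show (1/2 : ℝ) * (2*ε) = ε by ring, show a * (2 * ε) = 2 * (a * ε) by ring,
          Real.sin_two_mul]
        rw [div_div_div_cancel_right₀]
        · field_simp
        · exact ha.ne'
      · rw [lt_div_iff₀ ha]
        nlinarith
  · -- K = 0
    subst hK
    refine ⟨fun _ => 1, fun x => differentiableAt_const 1, fun x => rfl, rfl, ?_, ?_⟩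
    · have hd : deriv (fun _ : ℝ => (1:ℝ)) = fun _ => (0:ℝ) := by funext x; simp
      rw [hd]
      simpa using hasDerivAt_const (0:ℝ) (0:ℝ)
    · filter_upwards [self_mem_nhdsWithin] with ε (hε : 0 < ε)
      refine ⟨one_pos, ?_, by simp⟩
      rw [sigmaCoeff, if_neg (by positivity : (0:ℝ) < 2*ε).ne']
      simp only [neg_zero, sk, lt_irrefl, if_false, if_true, eq_self_iff_true]
      rw [show (1/2 : ℝ) * (2*ε) = ε by ring]
      rw [div_eq_div_iff (by positivity) (by norm_num)]
      ring
  · -- K > 0 : c x = cosh (a x), a = sqrt K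
    set a := Real.sqrt K with ha_def
    have ha : 0 < a := Real.sqrt_pos.2 hK
    have ha2 : a ^ 2 = K := Real.sq_sqrt hK.le
    have d1 : ∀ x : ℝ, HasDerivAt (fun y => Real.cosh (a * y)) (Real.sinh (a * x) * a) x := by
      intro x
      simpa [Function.comp_def] using (Real.hasDerivAt_cosh (a * x)).comp x ((hasDerivAt_id x).const_mul a)
    refine ⟨fun x => Real.cosh (a * x), fun x => (d1 x).differentiableAt, ?_, by simp, ?_, ?_⟩
    · intro x; show Real.cosh (a * -x) = Real.cosh (a * x)
      rw [mul_neg, Real.cosh_neg]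
    · have hd : deriv (fun y => Real.cosh (a * y)) = fun x => Real.sinh (a * x) * a :=
        funext fun x => (d1 x).deriv
      rw [hd]
      have d2 : HasDerivAt (fun x : ℝ => Real.sinh (a * x) * a) (Real.cosh (a * 0) * a * a) 0 := by
        have := ((Real.hasDerivAt_sinh (a * 0)).comp 0 ((hasDerivAt_id 0).const_mul a)).mul_const a
        simpa [mul_comm] using this
      have he : Real.cosh (a * 0) * a * a = K := by simp; nlinarith
      rwa [he] at d2
    · filter_upwards [self_mem_nhdsWithin] with ε (hε : 0 < ε)
      have hsinh : 0 < Real.sinh (a * ε) := by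
        rw [show (0:ℝ) = Real.sinh 0 by simp]
        exact Real.sinh_lt_sinh.2 (by positivity)
      have hcosh : 0 < Real.cosh (a * ε) := Real.cosh_pos _
      refine ⟨hcosh, ?_, fun h => absurd h (not_lt.2 hK.le)⟩
      rw [sigmaCoeff, if_neg (by positivity : (0:ℝ) < 2*ε).ne']
      simp only [sk, if_neg (by linarith : ¬ (0:ℝ) < -K), if_neg (by intro h; linarith : ¬ (-K:ℝ) = 0),
        neg_neg, ← ha_def]
      rw [show (1/2 : ℝ) * (2*ε) = ε by ring, show a * (2 * ε) = 2 * (a * ε) by ring,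
        Real.sinh_two_mul]
      rw [div_div_div_cancel_right₀]
      · field_simp
      · exact ha.ne'

/-- The one-dimensional curvature-dimension inequality `CD(K,0)` (case `N = 0`) for a
smooth density `ρ = e^{−ψ}` on an open interval implies the differential inequality
`ψ'' + (ψ')² ≥ K`. -/
theorem stmt_13 (I : Set ℝ) (hI_open : IsOpen I) (hI_conn : I.OrdConnected)
    (K : ℝ) (ψ : ℝ → ℝ) (hψ : ContDiffOn ℝ 2 ψ I)
    (ρ : ℝ → ℝ) (hρ : ∀ t, ρ t = Real.exp (-ψ t))
    (hCD : ∀ s ∈ I, ∀ t ∈ I, s < t →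
      (K < 0 → t - s < Real.pi / Real.sqrt (-K)) →
      ∀ lam ∈ Set.Ioo (0 : ℝ) 1,
        ρ ((1 - lam) * s + lam * t) ≥
          (sigmaCoeff (-K) (1 - lam) (t - s) * (ρ s)⁻¹ +
            sigmaCoeff (-K) lam (t - s) * (ρ t)⁻¹)⁻¹) :
    ∀ t ∈ I, deriv (deriv ψ) t + (deriv ψ t) ^ 2 ≥ K := by
  intro t₀ ht₀
  set h : ℝ → ℝ := fun x => Real.exp (ψ x) with hh_def
  have hψdiff : ∀ᶠ y in 𝓝 t₀, DifferentiableAt ℝ ψ y := by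
    filter_upwards [hI_open.mem_nhds ht₀] with y hy
    exact (hψ.contDiffAt (hI_open.mem_nhds hy)).differentiableAt (by norm_num)
  have hψ'diff : DifferentiableAt ℝ (deriv ψ) t₀ := by
    have h1 : ContDiffOn ℝ 1 (deriv ψ) I := hψ.deriv_of_isOpen hI_open (by norm_num)
    exact (h1.contDiffAt (hI_open.mem_nhds ht₀)).differentiableAt (by norm_num)
  have hhdiff : ∀ᶠ y in 𝓝 t₀, DifferentiableAt ℝ h y := by
    filter_upwards [hψdiff] with y hy
    exact hy.exp
  have hdh : deriv h =ᶠ[𝓝 t₀] fun y => Real.exp (ψ y) * deriv ψ y := by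
    filter_upwards [hψdiff] with y hy
    exact ((Real.hasDerivAt_exp (ψ y)).comp y hy.hasDerivAt).deriv
  set L : ℝ := Real.exp (ψ t₀) * (deriv (deriv ψ) t₀ + (deriv ψ t₀) ^ 2) with hL_def
  have hDD : HasDerivAt (deriv h) L t₀ := by
    have h1 : HasDerivAt (fun y => Real.exp (ψ y)) (Real.exp (ψ t₀) * deriv ψ t₀) t₀ :=
      (Real.hasDerivAt_exp (ψ t₀)).comp t₀ (hψdiff.self_of_nhds).hasDerivAt
    have h2 : HasDerivAt (deriv ψ) (deriv (deriv ψ) t₀) t₀ := hψ'diff.hasDerivAt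
    have h4 : HasDerivAt (fun y => Real.exp (ψ y) * deriv ψ y) L t₀ := by
      have h3 := h1.mul h2
      refine h3.congr_deriv ?_
      rw [hL_def]; ring
    exact hdh.hasDerivAt_iff.2 h4
  have T1 := symm_second_deriv hhdiff hDD
  obtain ⟨c, hcdiff, hceven, hc0, hcDD, hcev⟩ := exists_c K
  have T2 := symm_second_deriv (Eventually.of_forall hcdiff) hcDD
  have T2' := T2.mul_const (h t₀)
  obtain ⟨δ, hδpos, hδsub⟩ := Metric.isOpen_iff.1 hI_open t₀ ht₀
  have hee : ∀ᶠ ε in 𝓝[>] (0:ℝ),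
      (c (0 + ε) + c (0 - ε) - 2 * c 0) / ε ^ 2 * h t₀ ≤
        (h (t₀ + ε) + h (t₀ - ε) - 2 * h t₀) / ε ^ 2 := by
    have hδev : ∀ᶠ ε in 𝓝[>] (0:ℝ), ε < δ :=
      eventually_nhdsWithin_of_eventually_nhds (eventually_lt_nhds hδpos)
    filter_upwards [hδev, hcev, self_mem_nhdsWithin] with ε hεδ hc3 (hε : 0 < ε)
    obtain ⟨hcpos, hσ, hπ⟩ := hc3
    have hsI : t₀ - ε ∈ I := hδsub (by
      simp only [Metric.mem_ball, Real.dist_eq]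
      rw [abs_of_nonpos (by linarith)]
      simp; linarith)
    have htI : t₀ + ε ∈ I := hδsub (by
      simp only [Metric.mem_ball, Real.dist_eq]
      rw [abs_of_nonneg (by linarith)]
      simp; linarith)
    have key := hCD (t₀ - ε) hsI (t₀ + ε) htI (by linarith)
      (fun hK => by rw [show t₀ + ε - (t₀ - ε) = 2 * ε by ring]; exact hπ hK)
      (1/2) (by norm_num)
    rw [show (1 - (1/2:ℝ)) * (t₀ - ε) + (1/2) * (t₀ + ε) = t₀ by ring,
      show t₀ + ε - (t₀ - ε) = 2 * ε by ring,
      show (1 - (1/2:ℝ)) = 1/2 by norm_num, hσ, hρ, hρ, hρ,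
      Real.exp_neg, Real.exp_neg, Real.exp_neg, inv_inv, inv_inv] at key
    have hA : 0 < Real.exp (ψ (t₀ - ε)) := Real.exp_pos _
    have hB : 0 < Real.exp (ψ (t₀ + ε)) := Real.exp_pos _
    have hC : 0 < Real.exp (ψ t₀) := Real.exp_pos _
    have hS : 0 < 1/(2 * c ε) * Real.exp (ψ (t₀ - ε)) + 1/(2 * c ε) * Real.exp (ψ (t₀ + ε)) := by
      positivity
    have hkey2 : Real.exp (ψ t₀) ≤
        1/(2 * c ε) * Real.exp (ψ (t₀ - ε)) + 1/(2 * c ε) * Real.exp (ψ (t₀ + ε)) :=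
      (inv_le_inv₀ hS hC).mp key
    have hnum : (c (0 + ε) + c (0 - ε) - 2 * c 0) * h t₀ ≤
        h (t₀ + ε) + h (t₀ - ε) - 2 * h t₀ := by
      rw [zero_add, zero_sub, hceven, hc0]
      simp only [hh_def]
      have h2c : 0 < 2 * c ε := by linarith
      have h5 := mul_le_mul_of_nonneg_left hkey2 h2c.le
      have h6 : 2 * c ε * (1/(2 * c ε) * Real.exp (ψ (t₀ - ε)) +
          1/(2 * c ε) * Real.exp (ψ (t₀ + ε))) =
          Real.exp (ψ (t₀ - ε)) + Real.exp (ψ (t₀ + ε)) := by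
        field_simp
      rw [h6] at h5
      nlinarith
    rw [div_mul_eq_mul_div]
    gcongr
  have hfin : K * h t₀ ≤ L := le_of_tendsto_of_tendsto T2' T1 hee
  rw [ge_iff_le]
  have hep := Real.exp_pos (ψ t₀)
  rw [hL_def] at hfin
  nlinarith [hfin]
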